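/- Let H be a free ℤ-module of finite rank equipped with an alternating ℤ-bilinear form ω : H × H → ℤ that is unimodular, i.e. the map H → Hom_ℤ(H, ℤ) sending x to ω(x, ·) is a ℤ-module isomorphism. Let A and B be submodules of H with A = A^⊥ and B = B^⊥, and suppose the quotient H/(A+B) is torsion-free. Then (A ∩ B)^⊥ = A + B; equivalently, for every x ∈ H, one has ω(y, x) = 0 for all y ∈ A ∩ B if and only if x ∈ A + B. -/

import Mathlib

/-- Let `H` be a finite-rank free `ℤ`-module with an alternating, unimodular
bilinear form `ω`, and let `A`, `B` be submodules with `A = A^⊥`, `B = B^⊥`. If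
`H/(A+B)` is torsion-free, then `(A ∩ B)^⊥ = A + B`: for all `x ∈ H`,
`ω(y,x) = 0` for all `y ∈ A ∩ B` iff `x ∈ A + B`. -/
theorem stmt_2 (H : Type*) [AddCommGroup H] [Module ℤ H]
    [Module.Free ℤ H] [Module.Finite ℤ H]
    (ω : LinearMap.BilinForm ℤ H) (halt : ∀ x : H, ω x x = 0)
    (hunimod : Function.Bijective fun x : H => (ω x : H →ₗ[ℤ] ℤ))
    (A B : Submodule ℤ H)
    (hA : ∀ x : H, x ∈ A ↔ ∀ a ∈ A, ω a x = 0)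
    (hB : ∀ x : H, x ∈ B ↔ ∀ b ∈ B, ω b x = 0)
    (htf : NoZeroSMulDivisors ℤ (H ⧸ (A ⊔ B))) :
    ∀ x : H, (∀ y ∈ A ⊓ B, ω y x = 0) ↔ x ∈ A ⊔ B := by
  have skew : ∀ a b : H, ω a b = - ω b a := by
    intro a b
    have h := halt (a + b)
    simp only [map_add, LinearMap.add_apply, halt a, halt b, zero_add, add_zero] at h
    linarith
  intro x
  constructor
  · intro hx
    by_contra hxnot
    haveI hsub : Subsingleton (Module ℤ (H ⧸ (A ⊔ B))) := ⟨fun a b => by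
      haveI := AddCommGroup.uniqueIntModule (M := H ⧸ (A ⊔ B))
      exact Subsingleton.elim a b⟩
    haveI hFin : Module.Finite ℤ (H ⧸ (A ⊔ B)) :=
      (Subsingleton.elim (Submodule.Quotient.module (A ⊔ B))
        (AddCommGroup.toIntModule (H ⧸ (A ⊔ B)))) ▸ @Module.Finite.of_surjective ℤ H _ _ _ ℤ (H ⧸ (A ⊔ B)) _ _
          (Submodule.Quotient.module (A ⊔ B)) _ _ (A ⊔ B).mkQ (A ⊔ B).mkQ_surjective
    haveI hFree : Module.Free ℤ (H ⧸ (A ⊔ B)) := Module.free_of_finite_type_torsion_free'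
    let b := Module.Free.chooseBasis ℤ (H ⧸ (A ⊔ B))
    have hxq : Submodule.Quotient.mk (p := A ⊔ B) x ≠ 0 :=
      fun h => hxnot ((Submodule.Quotient.mk_eq_zero _).1 h)
    have hrepr : b.repr (Submodule.Quotient.mk (p := A ⊔ B) x) ≠ 0 :=
      b.repr.map_ne_zero_iff.2 hxq
    obtain ⟨i, hi⟩ : ∃ i, b.repr (Submodule.Quotient.mk (p := A ⊔ B) x) i ≠ 0 := by
      by_contra h
      push_neg at h
      exact hrepr (Finsupp.ext h)
    let g : H →+ ℤ :=
      { toFun := fun w => b.coord i (Submodule.Quotient.mk (p := A ⊔ B) w)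
        map_zero' := by
          show b.coord i (Submodule.Quotient.mk (p := A ⊔ B) (0 : H)) = 0
          have h0 : Submodule.Quotient.mk (p := A ⊔ B) (0 : H) = 0 := rfl
          rw [h0, map_zero]
        map_add' := fun u v => by
          show b.coord i (Submodule.Quotient.mk (p := A ⊔ B) (u + v))
            = b.coord i (Submodule.Quotient.mk u) + b.coord i (Submodule.Quotient.mk v)
          rw [Submodule.Quotient.mk_add, map_add] }
    set ψ : H →ₗ[ℤ] ℤ :=
      { toFun := g
        map_add' := g.map_add
        map_smul' := fun c w => by
          simpa using map_intCast_smul g ℤ ℤ c w } with hψ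
    obtain ⟨z, hz⟩ := hunimod.2 ψ
    have hzvan : ∀ w ∈ A ⊔ B, ω z w = 0 := by
      intro w hw
      have hw0 : Submodule.Quotient.mk (p := A ⊔ B) w = 0 :=
        (Submodule.Quotient.mk_eq_zero _).2 hw
      have h1 : ψ w = 0 := by
        show b.coord i (Submodule.Quotient.mk (p := A ⊔ B) w) = 0
        rw [hw0, map_zero]
      have h2 : ω z w = ψ w := by rw [← hz]
      rw [h2, h1]
    have hzA : z ∈ A := by
      rw [hA]
      intro a ha
      have := hzvan a (Submodule.mem_sup_left ha)
      rw [skew a z]; omega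
    have hzB : z ∈ B := by
      rw [hB]
      intro c hc
      have := hzvan c (Submodule.mem_sup_right hc)
      rw [skew c z]; omega
    have hzero := hx z ⟨hzA, hzB⟩
    have h3 : ω z x = ψ x := by rw [← hz]
    rw [h3] at hzero
    have hzero' : b.repr (Submodule.Quotient.mk (p := A ⊔ B) x) i = 0 := hzero
    exact hi hzero'
  · intro hx y hy
    obtain ⟨a, ha, c, hc, rfl⟩ := Submodule.mem_sup.1 hx
    have h1 : ω y a = 0 := ((hA a).1 ha) y hy.1
    have h2 : ω y c = 0 := ((hB c).1 hc) y hy.2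
    simp [h1, h2]
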